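/- Let t ∈ (0,1) and define β : ℤ → ℝ by β(n) = sgn(n)·|n|^{1/t} (so β(0) = 0). Then Λ_β = {(n, β(n)) : n ∈ ℤ} is a spectrum of the self-affine measure μ = μ_{R,B} for R = [[2,1],[0,2]] and B = {(0,0),(1,0)}, and dim_Be(Λ_β) = t. -/

import Mathlib

open MeasureTheory Filter Set Metric
open scoped ENNReal

noncomputable section

/-- The plane with the Euclidean metric. -/
abbrev Plane : Type := EuclideanSpace ℝ (Fin 2)

/-- The point `(a, b)` of the Euclidean plane. -/
def pt (a b : ℝ) : Plane := WithLp.toLp 2 ![a, b]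

/-- The self-affine measure `μ_{R,B}` for `R = [[2,1],[0,2]]`, `B = {(0,0),(1,0)}`:
the pushforward of Lebesgue measure on `[0,1]` under `x ↦ (x, 0)`. -/
def muRB : Measure Plane :=
  Measure.map (fun x : ℝ => pt x 0) (volume.restrict (Set.Icc (0:ℝ) 1))

instance : IsProbabilityMeasure (volume.restrict (Set.Icc (0:ℝ) 1)) :=
  ⟨by simp [Real.volume_Icc]⟩

lemma measurable_pt0 : Measurable (fun x : ℝ => pt x 0) := by
  unfold pt
  refine (WithLp.measurable_toLp (p := 2) (X := Fin 2 → ℝ)).comp ?_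
  refine measurable_pi_lambda _ (fun i => ?_)
  fin_cases i
  · simp only [Matrix.cons_val_zero]
    exact measurable_id
  · simp only [Matrix.cons_val_one, Matrix.head_cons]
    exact measurable_const

instance : IsProbabilityMeasure muRB :=
  Measure.isProbabilityMeasure_map measurable_pt0.aemeasurable

/-- The Fourier transform `μ̂(ξ) = ∫ e^{-2πi⟨ξ,x⟩} dμ(x)` of a measure on the plane. -/
def fourierTransform (μ : Measure Plane) (ξ : Plane) : ℂ :=
  ∫ x, Complex.exp ((-(2 * Real.pi * (inner ℝ ξ x : ℝ)) : ℝ) * Complex.I) ∂μ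

/-- The exponential function `e_λ(x) = e^{-2πi⟨λ,x⟩}`. -/
def expFn (lam : Plane) : Plane → ℂ :=
  fun x => Complex.exp ((-(2 * Real.pi * (inner ℝ lam x : ℝ)) : ℝ) * Complex.I)

lemma expFn_memLp (μ : Measure Plane) [IsFiniteMeasure μ] (lam : Plane) :
    MemLp (expFn lam) 2 μ := by
  refine MemLp.of_bound ?_ 1 ?_
  · apply Continuous.aestronglyMeasurable
    unfold expFn
    have h1 : Continuous fun x : Plane => (inner ℝ lam x : ℝ) :=
      continuous_const.inner continuous_id
    exact Complex.continuous_exp.comp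
      ((Complex.continuous_ofReal.comp ((continuous_const.mul h1).neg)).mul continuous_const)
  · refine Eventually.of_forall fun x => ?_
    unfold expFn
    rw [Complex.norm_exp_ofReal_mul_I]

/-- The exponential `e_λ` as an element of `L²(μ)`. -/
def expLp (μ : Measure Plane) [IsFiniteMeasure μ] (lam : Plane) : Lp ℂ 2 μ :=
  (expFn_memLp μ lam).toLp _

/-- `Λ` is an orthogonal set of `μ`: the exponentials `{e_λ : λ ∈ Λ}` form an
orthonormal family in `L²(μ)`. -/
def IsOrthogonalSet (μ : Measure Plane) [IsFiniteMeasure μ] (Λ : Set Plane) : Prop :=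
  Orthonormal ℂ (fun lam : Λ => expLp μ lam)

/-- `Λ` is a spectrum of `μ`: the exponentials `{e_λ : λ ∈ Λ}` form an
orthonormal basis of `L²(μ)`. -/
def IsSpectrum (μ : Measure Plane) [IsFiniteMeasure μ] (Λ : Set Plane) : Prop :=
  Orthonormal ℂ (fun lam : Λ => expLp μ lam) ∧
    (Submodule.span ℂ (Set.range (fun lam : Λ => expLp μ lam))).topologicalClosure = ⊤

/-- The upper `r`-Beurling density
`D_r^+(Λ) = limsup_{h→∞} sup_{x} #(Λ ∩ B(x,h)) / h^r`. -/
def beurlingDensity (r : ℝ) (Λ : Set Plane) : ℝ≥0∞ :=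
  limsup (fun h : ℝ =>
    ⨆ x : Plane, ((Λ ∩ Metric.ball x h).encard : ℝ≥0∞) / ENNReal.ofReal (h ^ r)) atTop

/-- The upper `r`-density (centered at the origin)
`B_r^+(Λ) = limsup_{h→∞} #(Λ ∩ B(0,h)) / h^r`. -/
def upperDensity (r : ℝ) (Λ : Set Plane) : ℝ≥0∞ :=
  limsup (fun h : ℝ =>
    ((Λ ∩ Metric.ball (0 : Plane) h).encard : ℝ≥0∞) / ENNReal.ofReal (h ^ r)) atTop

/-- The Beurling dimension `dim_Be(Λ) = sup {r > 0 : D_r^+(Λ) = ∞}`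
(equal to `0` when the set is empty, by the convention `sSup ∅ = 0` in `ℝ`). -/
def beurlingDim (Λ : Set Plane) : ℝ :=
  sSup {r : ℝ | 0 < r ∧ beurlingDensity r Λ = ⊤}

/-- The Banach dimension `dim_Ba(Λ) = sup {r > 0 : B_r^+(Λ) = ∞}`. -/
def banachDim (Λ : Set Plane) : ℝ :=
  sSup {r : ℝ | 0 < r ∧ upperDensity r Λ = ⊤}

/-- The sign of an integer, as a real number. -/
def isgn (n : ℤ) : ℝ := (Int.sign n : ℝ)

end

open MeasureTheory Filter Set Metric Complex Real
open scoped ENNReal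

noncomputable section

lemma inner_pt0 (a : Plane) (x : ℝ) : (inner ℝ a (pt x 0) : ℝ) = a 0 * x := by
  rw [PiLp.inner_apply]
  simp [pt, Fin.sum_univ_two, Matrix.cons_val_zero, Matrix.cons_val_one]
  rw [mul_comm]

/-- canonical exponential on ℝ -/
def F (c : ℝ) (x : ℝ) : ℂ := Complex.exp ((2 * Real.pi * c * x : ℝ) * Complex.I)

lemma expFn_pt0 (a : Plane) (x : ℝ) : expFn a (pt x 0) = F (-(a 0)) x := by
  unfold expFn F
  rw [inner_pt0]
  push_cast
  ring_nf

lemma measurePreserving_phi :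
    MeasurePreserving (fun x : ℝ => pt x 0) (volume.restrict (Set.Icc (0:ℝ) 1)) muRB :=
  ⟨measurable_pt0, rfl⟩

lemma conj_F (c x : ℝ) : (starRingEnd ℂ) (F c x) = F (-c) x := by
  unfold F
  rw [← Complex.exp_conj, map_mul, Complex.conj_ofReal, Complex.conj_I]
  push_cast
  ring

lemma F_mul (c d x : ℝ) : F c x * F d x = F (c + d) x := by
  unfold F
  rw [← Complex.exp_add]
  congr 1
  push_cast
  ring

end
open MeasureTheory Filter Set Metric Complex Real
open scoped ENNReal ComplexConjugate

noncomputable section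

lemma continuous_expFn (lam : Plane) : Continuous (expFn lam) := by
  unfold expFn
  have h1 : Continuous fun x : Plane => (inner ℝ lam x : ℝ) :=
    continuous_const.inner continuous_id
  exact Complex.continuous_exp.comp
    ((Complex.continuous_ofReal.comp ((continuous_const.mul h1).neg)).mul continuous_const)

lemma inner_expLp (a b : Plane) :
    (inner ℂ (expLp muRB a) (expLp muRB b) : ℂ) = ∫ x in Set.Icc (0:ℝ) 1, F (a 0 - b 0) x := by
  unfold expLp
  rw [MeasureTheory.L2.inner_def]
  have h1 := MemLp.coeFn_toLp (expFn_memLp muRB a)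
  have h2 := MemLp.coeFn_toLp (expFn_memLp muRB b)
  refine Eq.trans (integral_congr_ae (g := fun y => conj (expFn a y) * expFn b y) ?_) ?_
  · filter_upwards [h1, h2] with y hy1 hy2
    rw [hy1, hy2, RCLike.inner_apply, mul_comm]
  have hg : AEStronglyMeasurable (fun y : Plane => conj (expFn a y) * expFn b y) muRB :=
    (Continuous.aestronglyMeasurable
      ((Complex.continuous_conj.comp (continuous_expFn a)).mul (continuous_expFn b)))
  have step2 : ∫ y, conj (expFn a y) * expFn b y ∂muRB
      = ∫ x in Set.Icc (0:ℝ) 1, conj (expFn a (pt x 0)) * expFn b (pt x 0) := by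
    unfold muRB
    exact integral_map measurable_pt0.aemeasurable (by rw [← muRB]; exact hg)
  rw [step2]
  refine setIntegral_congr_fun measurableSet_Icc (fun x _ => ?_)
  rw [expFn_pt0, expFn_pt0, conj_F, F_mul]
  congr 1
  ring

lemma integral_F_zero : ∫ x in Set.Icc (0:ℝ) 1, F 0 x = 1 := by
  unfold F
  norm_num [Real.volume_Icc]

lemma integral_F_int (k : ℤ) (hk : k ≠ 0) : ∫ x in Set.Icc (0:ℝ) 1, F (k : ℝ) x = 0 := by
  rw [MeasureTheory.integral_Icc_eq_integral_Ioc,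
    ← intervalIntegral.integral_of_le (zero_le_one (α := ℝ))]
  have hform : ∀ x : ℝ, F (k : ℝ) x = Complex.exp ((2 * Real.pi * k * Complex.I) * x) := by
    intro x
    unfold F
    congr 1
    push_cast
    ring
  simp_rw [hform]
  rw [integral_exp_mul_complex (mul_ne_zero (mul_ne_zero (mul_ne_zero two_ne_zero
    (Complex.ofReal_ne_zero.mpr Real.pi_ne_zero)) (Int.cast_ne_zero.mpr hk)) Complex.I_ne_zero)]
  have hcast : ((2 * Real.pi * k * Complex.I) * ((1:ℝ):ℂ)) = (k : ℂ) * (2 * Real.pi * Complex.I) := by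
    push_cast
    ring
  rw [hcast, Complex.exp_int_mul_two_pi_mul_I]
  simp

end
open MeasureTheory Filter Set Metric Complex Real AddCircle
open scoped ENNReal ComplexConjugate

noncomputable section

/-- the spectrum candidate family -/
def lamf (t : ℝ) : ℤ → Plane := fun n : ℤ => pt (n : ℝ) (isgn n * |(n : ℝ)| ^ (1 / t))

lemma lamf_zero (t : ℝ) (n : ℤ) : lamf t n 0 = (n : ℝ) := rfl

lemma lamf_inj (t : ℝ) : Function.Injective (lamf t) := by
  intro n m h
  have h0 : lamf t n 0 = lamf t m 0 := by rw [h]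
  rw [lamf_zero, lamf_zero] at h0
  exact Int.cast_injective (α := ℝ) h0

lemma inner_lamf (t : ℝ) (n m : ℤ) :
    (inner ℂ (expLp muRB (lamf t n)) (expLp muRB (lamf t m)) : ℂ)
      = if n = m then 1 else 0 := by
  rw [inner_expLp, lamf_zero, lamf_zero]
  rcases eq_or_ne n m with rfl | hnm
  · simp only [sub_self, if_pos rfl]
    exact integral_F_zero
  · rw [if_neg hnm]
    have : ((n : ℝ) - (m : ℝ)) = (((n - m : ℤ) : ℝ)) := by push_cast; ring
    rw [this]
    exact integral_F_int (n - m) (sub_ne_zero.mpr hnm)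

lemma orthonormal_lamf (t : ℝ) :
    Orthonormal ℂ (fun lam : (Set.range (lamf t)) => expLp muRB lam) := by
  classical
  rw [orthonormal_iff_ite]
  rintro ⟨-, n, rfl⟩ ⟨-, m, rfl⟩
  rw [inner_lamf]
  by_cases h : n = m
  · subst h; simp
  · rw [if_neg h]
    split_ifs with hc
    exacts [absurd (lamf_inj t (congrArg Subtype.val hc)) h, rfl]

instance : Fact ((0:ℝ) < 1) := ⟨zero_lt_one⟩

lemma haar_eq_map_mk :
    (haarAddCircle : Measure (AddCircle (1:ℝ)))
      = Measure.map ((↑) : ℝ → AddCircle (1:ℝ)) (volume.restrict (Set.Ioc (0:ℝ) 1)) := by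
  have h := (AddCircle.measurePreserving_mk (T := (1:ℝ)) 0).map_eq
  rw [zero_add] at h
  rw [h, AddCircle.volume_eq_smul_haarAddCircle]
  simp

lemma measurePreserving_mk1 :
    MeasurePreserving ((↑) : ℝ → AddCircle (1:ℝ)) (volume.restrict (Set.Ioc (0:ℝ) 1))
      (haarAddCircle : Measure (AddCircle (1:ℝ))) :=
  ⟨AddCircle.measurable_mk', haar_eq_map_mk.symm⟩

/-- the "unrolling" map from the circle to `(0,1]`. -/
def unroll : AddCircle (1:ℝ) → ℝ := AddCircle.liftIoc 1 0 id

lemma measurable_unroll : Measurable unroll :=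
  measurable_subtype_coe.comp (AddCircle.measurableEquivIoc 1 0).measurable

lemma unroll_coe {x : ℝ} (hx : x ∈ Set.Ioc (0:ℝ) 1) : unroll (x : AddCircle (1:ℝ)) = x := by
  have hx' : x ∈ Set.Ioc (0:ℝ) (0 + 1) := by rwa [zero_add]
  exact AddCircle.liftIoc_coe_apply hx'

lemma measurePreserving_unroll :
    MeasurePreserving unroll (haarAddCircle : Measure (AddCircle (1:ℝ)))
      (volume.restrict (Set.Ioc (0:ℝ) 1)) := by
  refine ⟨measurable_unroll, ?_⟩
  rw [haar_eq_map_mk, Measure.map_map measurable_unroll AddCircle.measurable_mk']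
  have : (unroll ∘ ((↑) : ℝ → AddCircle (1:ℝ))) =ᵐ[volume.restrict (Set.Ioc (0:ℝ) 1)] id := by
    filter_upwards [ae_restrict_mem measurableSet_Ioc] with x hx
    exact unroll_coe hx
  rw [Measure.map_congr this, Measure.map_id]

lemma restrict_Icc_eq_Ioc :
    (volume.restrict (Set.Icc (0:ℝ) 1)) = volume.restrict (Set.Ioc (0:ℝ) 1) :=
  (Measure.restrict_congr_set Ioc_ae_eq_Icc).symm

lemma inner_expLp_right (a : Plane) (f : Lp ℂ 2 muRB) :
    (inner ℂ (expLp muRB a) f : ℂ)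
      = ∫ x in Set.Icc (0:ℝ) 1, F (a 0) x * f (pt x 0) := by
  unfold expLp
  rw [MeasureTheory.L2.inner_def]
  have h1 := MemLp.coeFn_toLp (expFn_memLp muRB a)
  refine Eq.trans (integral_congr_ae (g := fun y => conj (expFn a y) * f y) ?_) ?_
  · filter_upwards [h1] with y hy1
    rw [hy1, RCLike.inner_apply, mul_comm]
  have hg : AEStronglyMeasurable (fun y : Plane => conj (expFn a y) * f y) muRB :=
    ((Complex.continuous_conj.comp (continuous_expFn a)).aestronglyMeasurable).mul
      (Lp.aestronglyMeasurable f)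
  have step2 : ∫ y, conj (expFn a y) * f y ∂muRB
      = ∫ x in Set.Icc (0:ℝ) 1, conj (expFn a (pt x 0)) * f (pt x 0) := by
    unfold muRB
    exact integral_map measurable_pt0.aemeasurable hg
  rw [step2]
  refine setIntegral_congr_fun measurableSet_Icc (fun x _ => ?_)
  rw [expFn_pt0, conj_F, neg_neg]

lemma closure_span_lamf (t : ℝ) :
    (Submodule.span ℂ
      (Set.range (fun lam : (Set.range (lamf t)) => expLp muRB lam))).topologicalClosure = ⊤ := by
  rw [Submodule.topologicalClosure_eq_top_iff, Submodule.eq_bot_iff]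
  intro f hf
  have horto : ∀ n : ℤ, (inner ℂ (expLp muRB (lamf t n)) f : ℂ) = 0 := by
    intro n
    refine (Submodule.mem_orthogonal _ f).mp hf _ (Submodule.subset_span ?_)
    exact ⟨⟨lamf t n, ⟨n, rfl⟩⟩, rfl⟩
  set g : ℝ → ℂ := fun x => f (pt x 0) with hg_def
  set G : AddCircle (1:ℝ) → ℂ := g ∘ unroll with hG_def
  have mpφ : MeasurePreserving (fun x : ℝ => pt x 0)
      (volume.restrict (Set.Icc (0:ℝ) 1)) muRB := ⟨measurable_pt0, rfl⟩
  have mpφ' : MeasurePreserving (fun x : ℝ => pt x 0)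
      (volume.restrict (Set.Ioc (0:ℝ) 1)) muRB := by
    rw [← restrict_Icc_eq_Ioc]; exact mpφ
  have hgm : AEStronglyMeasurable g (volume.restrict (Set.Ioc (0:ℝ) 1)) :=
    (Lp.aestronglyMeasurable f).comp_measurePreserving mpφ'
  have hGm : AEStronglyMeasurable G haarAddCircle :=
    hgm.comp_measurePreserving measurePreserving_unroll
  have hGmem : MemLp G 2 haarAddCircle :=
    ((Lp.memLp f).comp_measurePreserving mpφ').comp_measurePreserving measurePreserving_unroll
  -- Fourier coefficients of G vanish
  have hGcoe : ∀ x ∈ Set.Ioc (0:ℝ) 1, G (x : AddCircle (1:ℝ)) = g x := by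
    intro x hx
    simp only [hG_def, Function.comp_apply]
    rw [unroll_coe hx]
  have hcoeff : ∀ n : ℤ, fourierCoeff G n = 0 := by
    intro n
    have key : fourierCoeff G n = ∫ x in Set.Ioc (0:ℝ) 1,
        (fourier (-n) (x : AddCircle (1:ℝ))) • G (x : AddCircle (1:ℝ)) := by
      unfold fourierCoeff
      rw [haar_eq_map_mk]
      refine integral_map AddCircle.measurable_mk'.aemeasurable ?_
      rw [← haar_eq_map_mk]
      exact ((map_continuous (fourier (-n))).aestronglyMeasurable).smul hGm
    rw [key]
    have step : ∫ x in Set.Ioc (0:ℝ) 1,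
          (fourier (-n) (x : AddCircle (1:ℝ))) • G (x : AddCircle (1:ℝ))
        = ∫ x in Set.Ioc (0:ℝ) 1, F (↑(-n) : ℝ) x * g x := by
      refine setIntegral_congr_fun measurableSet_Ioc (fun x hx => ?_)
      rw [hGcoe x hx, smul_eq_mul]
      congr 1
      rw [fourier_coe_apply]
      unfold F
      push_cast
      congr 1
      ring
    rw [step, ← MeasureTheory.integral_Icc_eq_integral_Ioc]
    have := horto (-n)
    rw [inner_expLp_right, lamf_zero] at this
    exact this
  -- conclude G = 0 a.e.
  have hGL0 : hGmem.toLp G = 0 := by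
    apply (LinearIsometryEquiv.map_eq_zero_iff fourierBasis.repr).mp
    ext n
    rw [fourierBasis_repr]
    have hae : fourierCoeff (⇑(hGmem.toLp G) : AddCircle (1:ℝ) → ℂ) n = fourierCoeff G n := by
      unfold fourierCoeff
      refine integral_congr_ae ?_
      filter_upwards [MemLp.coeFn_toLp hGmem] with z hz
      rw [hz]
    rw [hae, hcoeff n]
    simp
  have hGae : G =ᵐ[haarAddCircle] 0 := by
    have h1 := (MemLp.coeFn_toLp hGmem).symm
    rw [hGL0] at h1
    exact (h1.trans (Lp.coeFn_zero ℂ 2 _)).symm.symm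
  -- transfer back to f
  have hsnorm : eLpNorm (⇑f) 2 muRB = 0 := by
    have e1 : eLpNorm G 2 haarAddCircle = 0 := by
      rw [eLpNorm_congr_ae hGae, eLpNorm_zero]
    have e2 : eLpNorm g 2 (volume.restrict (Set.Ioc (0:ℝ) 1)) = eLpNorm G 2 haarAddCircle :=
      (eLpNorm_comp_measurePreserving hgm measurePreserving_unroll).symm
    have e3 : eLpNorm (⇑f) 2 muRB = eLpNorm g 2 (volume.restrict (Set.Ioc (0:ℝ) 1)) :=
      (eLpNorm_comp_measurePreserving (Lp.aestronglyMeasurable f) mpφ').symm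
    rw [e3, e2, e1]
  have : (⇑f) =ᵐ[muRB] 0 :=
    (eLpNorm_eq_zero_iff (Lp.aestronglyMeasurable f) (by norm_num)).mp hsnorm
  exact Lp.eq_zero_iff_ae_eq_zero.mpr this

end
open MeasureTheory Filter Set Metric
open scoped ENNReal Topology

noncomputable section

lemma pt_zero (a b : ℝ) : pt a b 0 = a := rfl
lemma pt_one (a b : ℝ) : pt a b 1 = b := rfl

lemma real_rpow_subadd {t : ℝ} (ht0 : 0 ≤ t) (ht1 : t ≤ 1) {x y : ℝ} (hx : 0 ≤ x) (hy : 0 ≤ y) :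
    (x + y) ^ t ≤ x ^ t + y ^ t := by
  have h := NNReal.rpow_add_le_add_rpow (Real.toNNReal x) (Real.toNNReal y) ht0 ht1
  rw [← Real.toNNReal_add hx hy] at h
  have h2 := NNReal.coe_le_coe.mpr h
  rwa [NNReal.coe_rpow, NNReal.coe_add, NNReal.coe_rpow, NNReal.coe_rpow,
    Real.coe_toNNReal _ (add_nonneg hx hy), Real.coe_toNNReal _ hx,
    Real.coe_toNNReal _ hy] at h2

/-- the inverse `y ↦ sgn(y)|y|^t` of the spectrum's second-coordinate map -/
def gfun (t : ℝ) (y : ℝ) : ℝ := if 0 ≤ y then y ^ t else -((-y) ^ t)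

lemma gfun_mono {t : ℝ} (ht : 0 < t) : Monotone (gfun t) := by
  intro u v huv
  unfold gfun
  rcases le_or_gt 0 u with hu | hu
  · rw [if_pos hu, if_pos (hu.trans huv)]
    exact Real.rpow_le_rpow hu huv ht.le
  · rw [if_neg (not_le.mpr hu)]
    rcases le_or_gt 0 v with hv | hv
    · rw [if_pos hv]
      exact le_trans (neg_nonpos.mpr (Real.rpow_nonneg (by linarith) t))
        (Real.rpow_nonneg hv t)
    · rw [if_neg (not_le.mpr hv)]
      have := Real.rpow_le_rpow (by linarith : (0:ℝ) ≤ -v) (by linarith : -v ≤ -u) ht.le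
      linarith

lemma gfun_beta {t : ℝ} (ht : 0 < t) (n : ℤ) :
    gfun t (isgn n * |(n : ℝ)| ^ (1 / t)) = (n : ℝ) := by
  have habs : (|(n : ℝ)| ^ (1 / t)) ^ t = |(n : ℝ)| := by
    rw [← Real.rpow_mul (abs_nonneg _), one_div_mul_cancel ht.ne', Real.rpow_one]
  rcases lt_trichotomy n 0 with hn | hn | hn
  · have hsgn : isgn n = -1 := by
      unfold isgn; rw [Int.sign_eq_neg_one_iff_neg.mpr hn]; norm_num
    have habspos : (0:ℝ) < |(n : ℝ)| ^ (1 / t) :=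
      Real.rpow_pos_of_pos (abs_pos.mpr (by exact_mod_cast hn.ne)) _
    unfold gfun
    rw [hsgn, neg_one_mul, if_neg (by linarith), neg_neg, habs,
      abs_of_neg (by exact_mod_cast hn : (n:ℝ) < 0)]
    ring
  · subst hn
    unfold gfun isgn
    simp [Real.zero_rpow ht.ne']
  · have hsgn : isgn n = 1 := by
      unfold isgn; rw [Int.sign_eq_one_iff_pos.mpr hn]; norm_num
    unfold gfun
    rw [hsgn, one_mul, if_pos (Real.rpow_nonneg (abs_nonneg _) _), habs,
      abs_of_pos (by exact_mod_cast hn : (0:ℝ) < (n:ℝ))]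

lemma gfun_diff_le {t : ℝ} (ht : 0 < t) (ht1 : t ≤ 1) {v u : ℝ} (hvu : v ≤ u) :
    gfun t u - gfun t v ≤ 2 * (u - v) ^ t := by
  have hd0 : (0:ℝ) ≤ u - v := by linarith
  have hdnn : (0:ℝ) ≤ (u - v) ^ t := Real.rpow_nonneg hd0 t
  unfold gfun
  rcases le_or_gt 0 v with hv | hv
  · rw [if_pos hv, if_pos (hv.trans hvu)]
    have : u ^ t ≤ (u - v) ^ t + v ^ t := by
      have := real_rpow_subadd ht.le ht1 hd0 hv
      rwa [sub_add_cancel] at this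
    linarith
  · rw [if_neg (not_le.mpr hv)]
    rcases le_or_gt 0 u with hu | hu
    · rw [if_pos hu]
      have h1 : u ^ t ≤ (u - v) ^ t :=
        Real.rpow_le_rpow hu (by linarith) ht.le
      have h2 : (-v) ^ t ≤ (u - v) ^ t :=
        Real.rpow_le_rpow (by linarith) (by linarith) ht.le
      linarith
    · rw [if_neg (not_le.mpr hu)]
      have : (-v) ^ t ≤ (u - v) ^ t + (-u) ^ t := by
        have := real_rpow_subadd ht.le ht1 hd0 (by linarith : (0:ℝ) ≤ -u)
        have he : u - v + -u = -v := by ring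
        rwa [he] at this
      linarith

lemma abs_sub_coord_le (z w : Plane) (i : Fin 2) : |z i - w i| ≤ dist z w := by
  rw [EuclideanSpace.dist_eq]
  have h1 : |z i - w i| = Real.sqrt (dist (z i) (w i) ^ 2) := by
    rw [Real.sqrt_sq dist_nonneg, Real.dist_eq]
  rw [h1]
  apply Real.sqrt_le_sqrt
  exact Finset.single_le_sum (f := fun j => dist (z j) (w j) ^ 2)
    (fun j _ => sq_nonneg _) (Finset.mem_univ i)

lemma norm_pt_le (a b : ℝ) : ‖pt a b‖ ≤ |a| + |b| := by
  rw [EuclideanSpace.norm_eq]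
  have : ∑ i, ‖pt a b i‖ ^ 2 = |a| ^ 2 + |b| ^ 2 := by
    rw [Fin.sum_univ_two, pt_zero, pt_one, Real.norm_eq_abs, Real.norm_eq_abs]
  rw [this]
  have h2 : |a| ^ 2 + |b| ^ 2 ≤ (|a| + |b|) ^ 2 := by
    nlinarith [abs_nonneg a, abs_nonneg b]
  calc Real.sqrt (|a| ^ 2 + |b| ^ 2) ≤ Real.sqrt ((|a| + |b|) ^ 2) := Real.sqrt_le_sqrt h2
    _ = |a| + |b| := Real.sqrt_sq (by positivity)

lemma count_upper {t : ℝ} (ht : t ∈ Set.Ioo (0:ℝ) 1) (x : Plane) {h : ℝ} (hh : 0 < h) :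
    ((Set.range (lamf t) ∩ Metric.ball x h).encard : ℝ≥0∞)
      ≤ ENNReal.ofReal (4 * h ^ t + 1) := by
  obtain ⟨ht0, ht1⟩ := ht
  set c : ℝ := x 1 with hc
  set a : ℤ := ⌈gfun t (c - h)⌉ with ha
  set b : ℤ := ⌊gfun t (c + h)⌋ with hb
  have hsub : Set.range (lamf t) ∩ Metric.ball x h ⊆ lamf t '' ↑(Finset.Icc a b) := by
    rintro p ⟨⟨n, rfl⟩, hball⟩
    refine ⟨n, ?_, rfl⟩
    rw [Finset.mem_coe, Finset.mem_Icc]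
    have hd := abs_sub_coord_le (lamf t n) x 1
    rw [mem_ball] at hball
    have habs : |isgn n * |(n : ℝ)| ^ (1 / t) - c| < h := by
      have : lamf t n 1 = isgn n * |(n : ℝ)| ^ (1 / t) := rfl
      rw [this] at hd
      exact lt_of_le_of_lt hd hball
    rw [abs_lt] at habs
    constructor
    · rw [ha, Int.ceil_le]
      calc gfun t (c - h) ≤ gfun t (isgn n * |(n : ℝ)| ^ (1 / t)) :=
            gfun_mono ht0 (by linarith [habs.1])
        _ = (n : ℝ) := gfun_beta ht0 n
    · rw [hb, Int.le_floor]
      calc (n : ℝ) = gfun t (isgn n * |(n : ℝ)| ^ (1 / t)) := (gfun_beta ht0 n).symm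
        _ ≤ gfun t (c + h) := gfun_mono ht0 (by linarith [habs.2])
  have hcard : (Set.range (lamf t) ∩ Metric.ball x h).encard
      ≤ (((Finset.Icc a b).card : ℕ) : ℕ∞) := by
    calc (Set.range (lamf t) ∩ Metric.ball x h).encard
        ≤ (lamf t '' ↑(Finset.Icc a b)).encard := Set.encard_le_encard hsub
      _ ≤ (↑(Finset.Icc a b) : Set ℤ).encard := Set.encard_image_le _ _
      _ = ((Finset.Icc a b).card : ℕ∞) := Set.encard_coe_eq_coe_finsetCard _
  have hreal : (((Finset.Icc a b).card : ℕ) : ℝ) ≤ 4 * h ^ t + 1 := by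
    rcases le_or_gt a (b + 1) with hba | hba
    · have hc := Int.card_Icc_of_le (h := hba)
      have heq : (((Finset.Icc a b).card : ℕ) : ℝ) = ((b : ℝ) + 1 - (a : ℝ)) := by
        exact_mod_cast hc
      rw [heq]
      have h1 : (b : ℝ) ≤ gfun t (c + h) := Int.floor_le _
      have h2 : gfun t (c - h) ≤ (a : ℝ) := Int.le_ceil _
      have h3 : gfun t (c + h) - gfun t (c - h) ≤ 2 * ((c + h) - (c - h)) ^ t :=
        gfun_diff_le ht0 ht1.le (by linarith)
      have h4 : ((c + h) - (c - h)) = 2 * h := by ring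
      rw [h4] at h3
      have h5 : (2 * h) ^ t ≤ 2 * h ^ t := by
        rw [Real.mul_rpow (by norm_num) hh.le]
        have : (2:ℝ) ^ t ≤ 2 := by
          calc (2:ℝ) ^ t ≤ (2:ℝ) ^ (1:ℝ) :=
                Real.rpow_le_rpow_of_exponent_le one_le_two ht1.le
            _ = 2 := Real.rpow_one 2
        exact mul_le_mul_of_nonneg_right this (Real.rpow_nonneg hh.le t)
      linarith
    · have hempty : Finset.Icc a b = ∅ := Finset.Icc_eq_empty (by omega)
      rw [hempty]
      have : (0:ℝ) ≤ 4 * h ^ t + 1 := by positivity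
      simpa using this
  calc ((Set.range (lamf t) ∩ Metric.ball x h).encard : ℝ≥0∞)
      ≤ ((((Finset.Icc a b).card : ℕ) : ℕ∞) : ℝ≥0∞) := by
        exact_mod_cast ENat.toENNReal_le.mpr hcard
    _ = ENNReal.ofReal (((Finset.Icc a b).card : ℕ) : ℝ) := by
        rw [ENat.toENNReal_coe, ENNReal.ofReal_natCast]
    _ ≤ ENNReal.ofReal (4 * h ^ t + 1) := ENNReal.ofReal_le_ofReal hreal

lemma density_le {t : ℝ} (ht : t ∈ Set.Ioo (0:ℝ) 1) {r : ℝ} (hr : t ≤ r) :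
    beurlingDensity r (Set.range (lamf t)) ≤ ENNReal.ofReal 5 := by
  unfold beurlingDensity
  refine limsup_le_of_le (by isBoundedDefault) ?_
  filter_upwards [eventually_ge_atTop (1:ℝ)] with h hh
  refine iSup_le fun x => ?_
  have hh0 : (0:ℝ) < h := lt_of_lt_of_le one_pos hh
  have hr0 : (0:ℝ) < r := lt_of_lt_of_le ht.1 hr
  have hbd : (4 * h ^ t + 1) / h ^ r ≤ 5 := by
    rw [div_le_iff₀ (Real.rpow_pos_of_pos hh0 r)]
    have e1 : h ^ t ≤ h ^ r := Real.rpow_le_rpow_of_exponent_le hh hr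
    have e2 : (1:ℝ) ≤ h ^ r := Real.one_le_rpow hh hr0.le
    linarith
  calc ((Set.range (lamf t) ∩ Metric.ball x h).encard : ℝ≥0∞) / ENNReal.ofReal (h ^ r)
      ≤ ENNReal.ofReal (4 * h ^ t + 1) / ENNReal.ofReal (h ^ r) :=
        ENNReal.div_le_div_right (count_upper ht x hh0) _
    _ = ENNReal.ofReal ((4 * h ^ t + 1) / h ^ r) :=
        (ENNReal.ofReal_div_of_pos (Real.rpow_pos_of_pos hh0 r)).symm
    _ ≤ ENNReal.ofReal 5 := ENNReal.ofReal_le_ofReal hbd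

lemma count_lower {t : ℝ} (ht : t ∈ Set.Ioo (0:ℝ) 1) {h : ℝ} (hh : 4 ≤ h) :
    ENNReal.ofReal ((h / 4) ^ t - 1)
      ≤ ((Set.range (lamf t) ∩ Metric.ball (0 : Plane) h).encard : ℝ≥0∞) := by
  obtain ⟨ht0, ht1⟩ := ht
  have hq1 : (1:ℝ) ≤ h / 4 := by linarith
  have hq0 : (0:ℝ) < h / 4 := by linarith
  set N : ℕ := ⌊(h / 4) ^ t⌋₊ with hN
  have himg : lamf t '' ↑(Finset.Icc (1:ℤ) (N:ℤ))
      ⊆ Set.range (lamf t) ∩ Metric.ball (0 : Plane) h := by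
    rintro p ⟨n, hn, rfl⟩
    rw [Finset.mem_coe, Finset.mem_Icc] at hn
    refine ⟨⟨n, rfl⟩, ?_⟩
    rw [mem_ball, dist_zero_right]
    have hn1 : (1:ℝ) ≤ (n:ℝ) := by exact_mod_cast hn.1
    have hnN : (n:ℝ) ≤ ((h / 4) ^ t) := by
      calc (n:ℝ) ≤ (N:ℝ) := by exact_mod_cast hn.2
        _ ≤ (h / 4) ^ t := Nat.floor_le (Real.rpow_nonneg hq0.le t)
    have hbeta : |isgn n * |(n : ℝ)| ^ (1 / t)| ≤ h / 4 := by
      have hpos : (0:ℤ) < n := by exact_mod_cast hn.1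
      have hsgn : isgn n = 1 := by
        unfold isgn; rw [Int.sign_eq_one_iff_pos.mpr hpos]; norm_num
      rw [hsgn, one_mul, _root_.abs_of_nonneg (Real.rpow_nonneg (abs_nonneg _) _)]
      have h1 : |(n:ℝ)| ^ (1 / t) ≤ ((h / 4) ^ t) ^ (1 / t) := by
        apply Real.rpow_le_rpow (abs_nonneg _) _ (by positivity)
        rw [_root_.abs_of_nonneg (by linarith : (0:ℝ) ≤ (n:ℝ))]
        exact hnN
      calc |(n:ℝ)| ^ (1 / t) ≤ ((h / 4) ^ t) ^ (1 / t) := h1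
        _ = h / 4 := by
            rw [← Real.rpow_mul hq0.le, mul_one_div_cancel ht0.ne', Real.rpow_one]
    have hn4 : (n:ℝ) ≤ h / 4 := by
      calc (n:ℝ) ≤ (h / 4) ^ t := hnN
        _ ≤ (h / 4) ^ (1:ℝ) := Real.rpow_le_rpow_of_exponent_le hq1 ht1.le
        _ = h / 4 := Real.rpow_one _
    calc ‖lamf t n‖ ≤ |(n:ℝ)| + |isgn n * |(n : ℝ)| ^ (1 / t)| := norm_pt_le _ _
      _ ≤ h / 4 + h / 4 := by
          refine add_le_add ?_ hbeta
          rw [_root_.abs_of_nonneg (by linarith : (0:ℝ) ≤ (n:ℝ))]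
          exact hn4
      _ < h := by linarith
  have hNcard : ((N : ℕ) : ℕ∞) ≤ (Set.range (lamf t) ∩ Metric.ball (0 : Plane) h).encard := by
    calc ((N : ℕ) : ℕ∞) = ((Finset.Icc (1:ℤ) (N:ℤ)).card : ℕ∞) := by
          rw [Int.card_Icc]
          norm_num
      _ = (↑(Finset.Icc (1:ℤ) (N:ℤ)) : Set ℤ).encard :=
          (Set.encard_coe_eq_coe_finsetCard _).symm
      _ = (lamf t '' ↑(Finset.Icc (1:ℤ) (N:ℤ))).encard :=
          ((lamf_inj t).encard_image _).symm
      _ ≤ (Set.range (lamf t) ∩ Metric.ball (0 : Plane) h).encard :=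
          Set.encard_le_encard himg
  calc ENNReal.ofReal ((h / 4) ^ t - 1) ≤ ((N : ℕ) : ℝ≥0∞) := by
        rw [← ENNReal.ofReal_natCast]
        apply ENNReal.ofReal_le_ofReal
        have := Nat.sub_one_lt_floor ((h / 4) ^ t)
        exact le_of_lt (by exact_mod_cast this)
    _ = (((N : ℕ) : ℕ∞) : ℝ≥0∞) := by rw [ENat.toENNReal_coe]
    _ ≤ ((Set.range (lamf t) ∩ Metric.ball (0 : Plane) h).encard : ℝ≥0∞) := by
        exact_mod_cast ENat.toENNReal_le.mpr hNcard

lemma density_eq_top {t : ℝ} (ht : t ∈ Set.Ioo (0:ℝ) 1) {r : ℝ} (hr0 : 0 < r) (hrt : r < t) :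
    beurlingDensity r (Set.range (lamf t)) = ⊤ := by
  obtain ⟨ht0, ht1⟩ := ht
  -- real-valued lower bound tends to infinity
  have hreal : Tendsto (fun h : ℝ => ((h / 4) ^ t - 1) / h ^ r) atTop atTop := by
    refine tendsto_atTop_mono' atTop ?_
      ((tendsto_rpow_atTop (sub_pos.mpr hrt)).atTop_div_const
        (by positivity : (0:ℝ) < 2 * 4 ^ t))
    filter_upwards [eventually_ge_atTop (max 4 (4 * (2:ℝ) ^ (1 / t)))] with h hhm
    have hh4 : (4:ℝ) ≤ h := le_trans (le_max_left _ _) hhm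
    have hh0 : (0:ℝ) < h := by linarith
    have hq0 : (0:ℝ) < h / 4 := by linarith
    have hge2 : (2:ℝ) ≤ (h / 4) ^ t := by
      have h1 : (2:ℝ) ^ (1 / t) ≤ h / 4 := by
        have := le_trans (le_max_right 4 (4 * (2:ℝ) ^ (1 / t))) hhm
        linarith
      calc (2:ℝ) = ((2:ℝ) ^ (1 / t)) ^ t := by
            rw [← Real.rpow_mul (by norm_num), one_div_mul_cancel ht0.ne', Real.rpow_one]
        _ ≤ (h / 4) ^ t := Real.rpow_le_rpow (by positivity) h1 ht0.le
    have hsplit : h ^ (t - r) / (2 * 4 ^ t) = ((h / 4) ^ t / 2) / h ^ r := by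
      rw [Real.rpow_sub hh0, Real.div_rpow hh0.le (by norm_num : (0:ℝ) ≤ 4),
        div_div, div_div, div_div]
      congr 1
      ring
    rw [hsplit]
    have hnum : (h / 4) ^ t / 2 ≤ (h / 4) ^ t - 1 := by linarith
    gcongr
  have htop : Tendsto (fun h : ℝ => ENNReal.ofReal (((h / 4) ^ t - 1) / h ^ r)) atTop (𝓝 ⊤) :=
    ENNReal.tendsto_ofReal_atTop.comp hreal
  have hev : (fun h : ℝ => ENNReal.ofReal (((h / 4) ^ t - 1) / h ^ r)) ≤ᶠ[atTop]
      (fun h : ℝ => ⨆ x : Plane,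
        ((Set.range (lamf t) ∩ Metric.ball x h).encard : ℝ≥0∞) / ENNReal.ofReal (h ^ r)) := by
    filter_upwards [eventually_ge_atTop (4:ℝ)] with h hh
    have hh0 : (0:ℝ) < h := by linarith
    calc ENNReal.ofReal (((h / 4) ^ t - 1) / h ^ r)
        = ENNReal.ofReal ((h / 4) ^ t - 1) / ENNReal.ofReal (h ^ r) :=
          ENNReal.ofReal_div_of_pos (Real.rpow_pos_of_pos hh0 r)
      _ ≤ ((Set.range (lamf t) ∩ Metric.ball (0 : Plane) h).encard : ℝ≥0∞)
            / ENNReal.ofReal (h ^ r) :=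
          ENNReal.div_le_div_right (count_lower ⟨ht0, ht1⟩ hh) _
      _ ≤ ⨆ x : Plane,
            ((Set.range (lamf t) ∩ Metric.ball x h).encard : ℝ≥0∞) / ENNReal.ofReal (h ^ r) :=
          le_iSup (fun x : Plane =>
            ((Set.range (lamf t) ∩ Metric.ball x h).encard : ℝ≥0∞) / ENNReal.ofReal (h ^ r))
            (0 : Plane)
  unfold beurlingDensity
  have hle := Filter.limsup_le_limsup hev
  rw [htop.limsup_eq] at hle
  exact top_unique hle

lemma beurlingDim_lamf {t : ℝ} (ht : t ∈ Set.Ioo (0:ℝ) 1) :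
    beurlingDim (Set.range (lamf t)) = t := by
  unfold beurlingDim
  have hset : {r : ℝ | 0 < r ∧ beurlingDensity r (Set.range (lamf t)) = ⊤} = Set.Ioo 0 t := by
    ext r
    constructor
    · rintro ⟨hr0, hrtop⟩
      refine ⟨hr0, ?_⟩
      by_contra hle
      push_neg at hle
      have hbd := density_le ht hle
      rw [hrtop] at hbd
      exact (lt_irrefl _ (lt_of_le_of_lt hbd ENNReal.ofReal_lt_top))
    · rintro ⟨hr0, hrt⟩
      exact ⟨hr0, density_eq_top ht hr0 hrt⟩
  rw [hset]
  exact csSup_Ioo ht.1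

end
/-- For `t ∈ (0,1)` and `β(n) = sgn(n)·|n|^{1/t}`, the set `Λ_β` is a
spectrum of `μ_{R,B}` with `dim_Be(Λ_β) = t`. -/
theorem isSpectrum_muRB_power (t : ℝ) (ht : t ∈ Set.Ioo (0 : ℝ) 1) :
    IsSpectrum muRB
        (Set.range fun n : ℤ => pt (n : ℝ) (isgn n * |(n : ℝ)| ^ (1 / t))) ∧
      beurlingDim
        (Set.range fun n : ℤ => pt (n : ℝ) (isgn n * |(n : ℝ)| ^ (1 / t))) = t := by
  refine ⟨⟨?_, ?_⟩, ?_⟩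
  · exact orthonormal_lamf t
  · exact closure_span_lamf t
  · exact beurlingDim_lamf ht
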